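/- arXiv:1404.1206 — 2 statements merged into one kernel-verified Lean document; each statement's English description precedes it below -/
import Mathlib

section
/- Let G ~ G(n,p), F a graph without isolated vertices with 3 ≤ v(F) = t ≤ k, and fix a pair ij of vertices. Define S_{ij}(F,G) = S(F, G ∪ {ij}) − S(F, G \ {ij}). Then E[S_{ij}(F,G)] = 0 and E[S_{ij}(F,G)^2] ≤ k^2 · p^{e(F)−1} · n^{t−2}. -/
open scoped Classical

/-- The centered edge indicator `I_G(e) - p`. -/
noncomputable def edgeInd {n : ℕ} (G : SimpleGraph (Fin n)) (p : ℝ) (e : Sym2 (Fin n)) : ℝ :=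
  (if e ∈ G.edgeSet then (1 : ℝ) else 0) - p

/-- `S(F,G) = Σ_{F'} Π_{e ∈ E(F')} (I_G(e) − p)`, the sum over all copies `F'` of `F`
with vertex set contained in `V(G)`.  Each copy `F' = F.map f` arises from exactly
`|Aut F|` embeddings `f`, so the sum over copies equals the sum over embeddings
divided by `|Aut F|`. -/
noncomputable def Ssum {n t : ℕ} (G : SimpleGraph (Fin n)) (p : ℝ)
    (F : SimpleGraph (Fin t)) : ℝ :=
  (∑ f : Fin t ↪ Fin n, ∏ e ∈ F.edgeFinset, edgeInd G p (e.map f)) /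
    (Nat.card (F ≃g F))

/-- the single edge `K₂` -/
noncomputable def K2 : SimpleGraph (Fin 2) := ⊤
/-- the path `P₂` with two edges -/
noncomputable def P2 : SimpleGraph (Fin 3) := SimpleGraph.fromEdgeSet {s(0,1), s(1,2)}
/-- the triangle `K₃` -/
noncomputable def K3 : SimpleGraph (Fin 3) := ⊤
/-- the disjoint union of two edges `2K₂` -/
noncomputable def twoK2 : SimpleGraph (Fin 4) := SimpleGraph.fromEdgeSet {s(0,1), s(2,3)}

/-- Expectation of a graph functional over the Erdős–Rényi random graph `G(n,p)`:
every pair is an edge independently with probability `p`. -/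
noncomputable def ERexp (n : ℕ) (p : ℝ) (h : SimpleGraph (Fin n) → ℝ) : ℝ :=
  ∑ ω : Sym2 (Fin n) → Bool,
    (∏ e : Sym2 (Fin n), if ω e then p else 1 - p) *
      h (SimpleGraph.fromEdgeSet {e | ω e = true})

/-- `S_{ij}(F,G) = S(F, G ∪ {ij}) − S(F, G \ {ij})`. -/
noncomputable def Sij {n t : ℕ} (G : SimpleGraph (Fin n)) (p : ℝ) (F : SimpleGraph (Fin t))
    (i j : Fin n) : ℝ :=
  Ssum (G ⊔ SimpleGraph.fromEdgeSet {s(i,j)}) p F - Ssum (G.deleteEdges {s(i,j)}) p F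

open Finset

section Aux

variable {n t : ℕ}

lemma edgeInd_fromEdgeSet (p : ℝ) (ω : Sym2 (Fin n) → Bool) (e : Sym2 (Fin n))
    (he : ¬ e.IsDiag) :
    edgeInd (SimpleGraph.fromEdgeSet {e | ω e = true}) p e
      = (if ω e then (1:ℝ) else 0) - p := by
  unfold edgeInd
  congr 1
  simp [SimpleGraph.edgeSet_fromEdgeSet, he]

/-- Independence: the expectation of a product of powers of centered indicators over
distinct non-diagonal edges factorizes. -/
lemma ERexp_prod_pow (p : ℝ) (s : Finset (Sym2 (Fin n)))
    (hs : ∀ e ∈ s, ¬ e.IsDiag) (m : Sym2 (Fin n) → ℕ) :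
    ERexp n p (fun G => ∏ e ∈ s, edgeInd G p e ^ m e)
      = ∏ e ∈ s, (p * (1-p)^(m e) + (1-p) * (-p)^(m e)) := by
  unfold ERexp
  have h1 : ∀ ω : Sym2 (Fin n) → Bool,
      (∏ e : Sym2 (Fin n), if ω e then p else 1 - p) *
        ∏ e ∈ s, edgeInd (SimpleGraph.fromEdgeSet {e | ω e = true}) p e ^ m e
      = ∏ e : Sym2 (Fin n),
          ((if ω e then p else 1-p) *
            (if e ∈ s then ((if ω e then (1:ℝ) else 0) - p) ^ m e else 1)) := by
    intro ω
    rw [Finset.prod_mul_distrib]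
    congr 1
    rw [Finset.prod_ite_mem, Finset.univ_inter]
    exact Finset.prod_congr rfl fun e he => by rw [edgeInd_fromEdgeSet p ω e (hs e he)]
  simp only [h1]
  have h2 : (∑ ω : Sym2 (Fin n) → Bool, ∏ e : Sym2 (Fin n),
      ((if ω e then p else 1-p) *
        (if e ∈ s then ((if ω e then (1:ℝ) else 0) - p) ^ m e else 1)))
      = ∏ e : Sym2 (Fin n), ∑ b : Bool,
          ((if b then p else 1-p) *
            (if e ∈ s then ((if b then (1:ℝ) else 0) - p) ^ m e else 1)) := by
    rw [Finset.prod_univ_sum]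
    rw [Fintype.piFinset_univ]
  rw [h2]
  have h3 : ∀ e : Sym2 (Fin n), (∑ b : Bool,
      ((if b then p else 1-p) *
        (if e ∈ s then ((if b then (1:ℝ) else 0) - p) ^ m e else 1)))
      = if e ∈ s then (p * (1-p)^(m e) + (1-p) * (-p)^(m e)) else 1 := by
    intro e
    rw [Fintype.sum_bool]
    by_cases he : e ∈ s <;> simp [he]
  simp only [h3]
  rw [Finset.prod_ite_mem, Finset.univ_inter]

noncomputable def Dterm (G : SimpleGraph (Fin n)) (p : ℝ) (F : SimpleGraph (Fin t))
    (i j : Fin n) (f : Fin t ↪ Fin n) : ℝ :=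
  ∏ e ∈ F.edgeFinset, edgeInd (G ⊔ SimpleGraph.fromEdgeSet {s(i,j)}) p (e.map f) -
  ∏ e ∈ F.edgeFinset, edgeInd (G.deleteEdges {s(i,j)}) p (e.map f)

lemma Sij_eq (G : SimpleGraph (Fin n)) (p : ℝ) (F : SimpleGraph (Fin t)) (i j : Fin n) :
    Sij G p F i j = (∑ f : Fin t ↪ Fin n, Dterm G p F i j f) / (Nat.card (F ≃g F)) := by
  unfold Sij Ssum Dterm
  rw [div_sub_div_same, Finset.sum_sub_distrib]

lemma edgeInd_sup_ne (G : SimpleGraph (Fin n)) (p : ℝ) (i j : Fin n)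
    (e' : Sym2 (Fin n)) (he : e' ≠ s(i,j)) :
    edgeInd (G ⊔ SimpleGraph.fromEdgeSet {s(i,j)}) p e' = edgeInd G p e' := by
  unfold edgeInd
  congr 1
  simp [SimpleGraph.edgeSet_sup, SimpleGraph.edgeSet_fromEdgeSet, he]

lemma edgeInd_del_ne (G : SimpleGraph (Fin n)) (p : ℝ) (i j : Fin n)
    (e' : Sym2 (Fin n)) (he : e' ≠ s(i,j)) :
    edgeInd (G.deleteEdges {s(i,j)}) p e' = edgeInd G p e' := by
  unfold edgeInd
  congr 1
  simp [SimpleGraph.edgeSet_deleteEdges, he]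

lemma edgeInd_sup_self (G : SimpleGraph (Fin n)) (p : ℝ) (i j : Fin n) (hij : i ≠ j) :
    edgeInd (G ⊔ SimpleGraph.fromEdgeSet {s(i,j)}) p s(i,j) = 1 - p := by
  unfold edgeInd
  simp [SimpleGraph.edgeSet_sup, SimpleGraph.edgeSet_fromEdgeSet, hij]

lemma edgeInd_del_self (G : SimpleGraph (Fin n)) (p : ℝ) (i j : Fin n) :
    edgeInd (G.deleteEdges {s(i,j)}) p s(i,j) = - p := by
  unfold edgeInd
  simp [SimpleGraph.edgeSet_deleteEdges]

lemma Dterm_zero (G : SimpleGraph (Fin n)) (p : ℝ) (F : SimpleGraph (Fin t))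
    (i j : Fin n) (f : Fin t ↪ Fin n)
    (h : ∀ e ∈ F.edgeFinset, Sym2.map f e ≠ s(i,j)) :
    Dterm G p F i j f = 0 := by
  unfold Dterm
  rw [sub_eq_zero]
  refine Finset.prod_congr rfl fun e he => ?_
  rw [edgeInd_sup_ne _ _ _ _ _ (h e he), edgeInd_del_ne _ _ _ _ _ (h e he)]

/-- the mapped edge set minus `s(i,j)` -/
noncomputable def Sf (F : SimpleGraph (Fin t)) (i j : Fin n)
    (f : Fin t ↪ Fin n) : Finset (Sym2 (Fin n)) :=
  (F.edgeFinset.image (Sym2.map f)).erase s(i,j)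

lemma Sf_nondiag (F : SimpleGraph (Fin t)) (i j : Fin n) (f : Fin t ↪ Fin n) :
    ∀ e' ∈ Sf F i j f, ¬ e'.IsDiag := by
  intro e' he'
  have := Finset.mem_of_mem_erase he'
  obtain ⟨e, he, rfl⟩ := Finset.mem_image.mp this
  rw [Sym2.isDiag_map f.injective]
  exact F.not_isDiag_of_mem_edgeSet (SimpleGraph.mem_edgeFinset.mp he)

lemma Sf_card (F : SimpleGraph (Fin t)) (i j : Fin n) (f : Fin t ↪ Fin n)
    (hf : ∃ e0 ∈ F.edgeFinset, Sym2.map f e0 = s(i,j)) :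
    (Sf F i j f).card = F.edgeFinset.card - 1 := by
  obtain ⟨e0, he0, h0⟩ := hf
  unfold Sf
  rw [Finset.card_erase_of_mem, Finset.card_image_of_injective _ (Sym2.map.injective f.injective)]
  rw [← h0]
  exact Finset.mem_image_of_mem _ he0

lemma Dterm_eq (G : SimpleGraph (Fin n)) (p : ℝ) (F : SimpleGraph (Fin t))
    (i j : Fin n) (hij : i ≠ j) (f : Fin t ↪ Fin n)
    (e0 : Sym2 (Fin t)) (he0 : e0 ∈ F.edgeFinset) (h0 : Sym2.map f e0 = s(i,j)) :
    Dterm G p F i j f = ∏ e' ∈ Sf F i j f, edgeInd G p e' := by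
  have hinj : Function.Injective (Sym2.map f) := Sym2.map.injective f.injective
  have hne : ∀ e ∈ F.edgeFinset.erase e0, Sym2.map f e ≠ s(i,j) := by
    intro e he hc
    exact (Finset.mem_erase.mp he).1 (hinj (hc.trans h0.symm))
  have hprod : ∀ (H : SimpleGraph (Fin n)),
      (∏ e ∈ F.edgeFinset, edgeInd H p (e.map f))
        = edgeInd H p s(i,j) * ∏ e ∈ F.edgeFinset.erase e0, edgeInd H p (e.map f) := by
    intro H
    rw [← Finset.mul_prod_erase _ _ he0, h0]
  unfold Dterm
  rw [hprod, hprod, edgeInd_sup_self _ _ _ _ hij, edgeInd_del_self]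
  have hsame : ∀ (H : SimpleGraph (Fin n)), (H = G ⊔ SimpleGraph.fromEdgeSet {s(i,j)} ∨
      H = G.deleteEdges {s(i,j)}) →
      (∏ e ∈ F.edgeFinset.erase e0, edgeInd H p (e.map f))
        = ∏ e' ∈ Sf F i j f, edgeInd G p e' := by
    intro H hH
    have heq : (∏ e ∈ F.edgeFinset.erase e0, edgeInd H p (e.map f))
        = ∏ e ∈ F.edgeFinset.erase e0, edgeInd G p (e.map f) := by
      refine Finset.prod_congr rfl fun e he => ?_
      rcases hH with rfl | rfl
      · exact edgeInd_sup_ne _ _ _ _ _ (hne e he)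
      · exact edgeInd_del_ne _ _ _ _ _ (hne e he)
    rw [heq]
    unfold Sf
    rw [← h0, ← Finset.image_erase hinj]
    exact (Finset.prod_image fun a _ b _ hab => hinj hab).symm
  rw [hsame _ (Or.inl rfl), hsame _ (Or.inr rfl)]
  ring

lemma ERexp_sum_div {ι : Type*} [Fintype ι] (n : ℕ) (p : ℝ) (c : ℝ)
    (h : ι → SimpleGraph (Fin n) → ℝ) :
    ERexp n p (fun G => (∑ f : ι, h f G) / c) = (∑ f : ι, ERexp n p (h f)) / c := by
  unfold ERexp
  simp only [← mul_div_assoc]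
  rw [← Finset.sum_div]
  congr 1
  simp only [Finset.mul_sum]
  rw [Finset.sum_comm]

lemma two_le_card_edgeFinset (F : SimpleGraph (Fin t)) (hiso : ∀ v : Fin t, ∃ w, F.Adj v w)
    (ht3 : 3 ≤ t) : 2 ≤ F.edgeFinset.card := by
  by_contra hc
  push_neg at hc
  have hle : ∀ a ∈ F.edgeFinset, ∀ b ∈ F.edgeFinset, a = b :=
    Finset.card_le_one.mp (by omega)
  set v0 : Fin t := ⟨0, by omega⟩
  set v1 : Fin t := ⟨1, by omega⟩
  set v2 : Fin t := ⟨2, by omega⟩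
  obtain ⟨w0, h0⟩ := hiso v0
  obtain ⟨w1, h1⟩ := hiso v1
  obtain ⟨w2, h2⟩ := hiso v2
  have e0m : s(v0, w0) ∈ F.edgeFinset := by simp [SimpleGraph.mem_edgeFinset, h0]
  have e1m : s(v1, w1) ∈ F.edgeFinset := by simp [SimpleGraph.mem_edgeFinset, h1]
  have e2m : s(v2, w2) ∈ F.edgeFinset := by simp [SimpleGraph.mem_edgeFinset, h2]
  have h10 : v1 ∈ s(v0, w0) := by rw [hle _ e0m _ e1m]; simp
  have h20 : v2 ∈ s(v0, w0) := by rw [hle _ e0m _ e2m]; simp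
  rw [Sym2.mem_iff] at h10 h20
  have hv01 : v0 ≠ v1 := by simp [v0, v1, Fin.ext_iff]
  have hv02 : v0 ≠ v2 := by simp [v0, v2, Fin.ext_iff]
  have hv12 : v1 ≠ v2 := by simp [v1, v2, Fin.ext_iff]
  rcases h10 with h10 | h10
  · exact hv01 h10.symm
  rcases h20 with h20 | h20
  · exact hv02 h20.symm
  exact hv12 (h10.trans h20.symm)

lemma ERexp_Dterm_eq_zero (p : ℝ) (F : SimpleGraph (Fin t))
    (hiso : ∀ v : Fin t, ∃ w, F.Adj v w) (ht3 : 3 ≤ t)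
    (i j : Fin n) (hij : i ≠ j) (f : Fin t ↪ Fin n) :
    ERexp n p (fun G => Dterm G p F i j f) = 0 := by
  by_cases hP : ∃ e0 ∈ F.edgeFinset, Sym2.map f e0 = s(i,j)
  · obtain ⟨e0, he0, h0⟩ := hP
    have hfun : (fun G : SimpleGraph (Fin n) => Dterm G p F i j f)
        = fun G => ∏ e' ∈ Sf F i j f, edgeInd G p e' ^ (1:ℕ) := by
      funext G
      simp only [pow_one]
      exact Dterm_eq G p F i j hij f e0 he0 h0
    rw [hfun, ERexp_prod_pow p _ (Sf_nondiag F i j f) _]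
    have hc : (Sf F i j f).card ≠ 0 := by
      rw [Sf_card F i j f ⟨e0, he0, h0⟩]
      have := two_le_card_edgeFinset F hiso ht3
      omega
    obtain ⟨e', he'⟩ := Finset.card_ne_zero.mp hc
    refine Finset.prod_eq_zero he' ?_
    ring
  · push_neg at hP
    have hfun : (fun G : SimpleGraph (Fin n) => Dterm G p F i j f) = fun _ => (0:ℝ) :=
      funext fun G => Dterm_zero G p F i j f hP
    rw [hfun]
    simp [ERexp]

lemma prod_union_pow {α : Type*} [DecidableEq α] (A B : Finset α) (a : α → ℝ) :
    (∏ e ∈ A, a e) * (∏ e ∈ B, a e)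
      = ∏ e ∈ A ∪ B, a e ^ ((if e ∈ A then 1 else 0) + (if e ∈ B then 1 else 0)) := by
  have hA : (∏ e ∈ A, a e) = ∏ e ∈ A ∪ B, (if e ∈ A then a e else 1) := by
    rw [Finset.prod_ite_mem, Finset.union_inter_cancel_left]
  have hB : (∏ e ∈ B, a e) = ∏ e ∈ A ∪ B, (if e ∈ B then a e else 1) := by
    rw [Finset.prod_ite_mem, Finset.union_inter_cancel_right]
  rw [hA, hB, ← Finset.prod_mul_distrib]
  refine Finset.prod_congr rfl fun e _ => ?_
  by_cases h1 : e ∈ A <;> by_cases h2 : e ∈ B <;> simp [h1, h2, pow_succ, pow_zero]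

lemma ERexp_Dmul_bound (p : ℝ) (hp0 : 0 < p) (hp1 : p < 1) (F : SimpleGraph (Fin t))
    (hiso : ∀ v : Fin t, ∃ w, F.Adj v w) (ht3 : 3 ≤ t)
    (i j : Fin n) (hij : i ≠ j) (f g : Fin t ↪ Fin n) :
    0 ≤ ERexp n p (fun G => Dterm G p F i j f * Dterm G p F i j g) ∧
    ERexp n p (fun G => Dterm G p F i j f * Dterm G p F i j g) ≤
      (if (∃ e0 ∈ F.edgeFinset, Sym2.map f e0 = s(i,j)) ∧
          ((∃ e0 ∈ F.edgeFinset, Sym2.map g e0 = s(i,j)) ∧ Sf F i j f = Sf F i j g)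
        then p ^ (F.edgeFinset.card - 1) else (0:ℝ)) := by
  by_cases hPf : ∃ e0 ∈ F.edgeFinset, Sym2.map f e0 = s(i,j)
  case neg =>
    push_neg at hPf
    have hfun : (fun G : SimpleGraph (Fin n) => Dterm G p F i j f * Dterm G p F i j g)
        = fun _ => (0:ℝ) := by
      funext G
      rw [Dterm_zero G p F i j f hPf, zero_mul]
    rw [hfun]
    have hz : ERexp n p (fun _ => (0:ℝ)) = 0 := by simp [ERexp]
    rw [hz]
    constructor
    · exact le_refl _
    · rw [if_neg]
      intro hcon
      obtain ⟨⟨e0, he0, h0⟩, _⟩ := hcon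
      exact hPf e0 he0 h0
  case pos =>
  by_cases hPg : ∃ e0 ∈ F.edgeFinset, Sym2.map g e0 = s(i,j)
  case neg =>
    push_neg at hPg
    have hfun : (fun G : SimpleGraph (Fin n) => Dterm G p F i j f * Dterm G p F i j g)
        = fun _ => (0:ℝ) := by
      funext G
      rw [Dterm_zero G p F i j g hPg, mul_zero]
    rw [hfun]
    have hz : ERexp n p (fun _ => (0:ℝ)) = 0 := by simp [ERexp]
    rw [hz]
    refine ⟨le_refl _, ?_⟩
    rw [if_neg]
    intro hcon
    obtain ⟨_, ⟨e0, he0, h0⟩, _⟩ := hcon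
    exact hPg e0 he0 h0
  case pos =>
  obtain ⟨e0f, he0f, h0f⟩ := hPf
  obtain ⟨e0g, he0g, h0g⟩ := hPg
  set A := Sf F i j f with hA
  set B := Sf F i j g with hB
  have hfun : (fun G : SimpleGraph (Fin n) => Dterm G p F i j f * Dterm G p F i j g)
      = fun G => ∏ e' ∈ A ∪ B,
          edgeInd G p e' ^ ((if e' ∈ A then 1 else 0) + (if e' ∈ B then 1 else 0)) := by
    funext G
    rw [Dterm_eq G p F i j hij f e0f he0f h0f, Dterm_eq G p F i j hij g e0g he0g h0g]
    exact prod_union_pow A B _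
  have hnd : ∀ e' ∈ A ∪ B, ¬ e'.IsDiag := by
    intro e' he'
    rcases Finset.mem_union.mp he' with h | h
    · exact Sf_nondiag F i j f e' h
    · exact Sf_nondiag F i j g e' h
  rw [hfun, ERexp_prod_pow p _ hnd _]
  by_cases hS : A = B
  · -- equal edge sets: value is (p(1-p))^(M-1)
    have hAB : A ∪ B = A := by rw [← hS, Finset.union_self]
    have hval : (∏ e' ∈ A ∪ B, (p * (1-p)^((if e' ∈ A then 1 else 0) + (if e' ∈ B then 1 else 0))
          + (1-p) * (-p)^((if e' ∈ A then 1 else 0) + (if e' ∈ B then 1 else 0))))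
        = (p * (1-p)) ^ (F.edgeFinset.card - 1) := by
      rw [hAB]
      have : ∀ e' ∈ A, (p * (1-p)^((if e' ∈ A then 1 else 0) + (if e' ∈ B then 1 else 0))
          + (1-p) * (-p)^((if e' ∈ A then 1 else 0) + (if e' ∈ B then 1 else 0)))
          = p * (1-p) := by
        intro e' he'
        have h2 : e' ∈ B := by rw [← hS]; exact he'
        rw [if_pos he', if_pos h2]
        ring
      rw [Finset.prod_congr rfl this, Finset.prod_const,
        hA, Sf_card F i j f ⟨e0f, he0f, h0f⟩]
    rw [hval, if_pos ⟨⟨e0f, he0f, h0f⟩, ⟨e0g, he0g, h0g⟩, hS⟩]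
    constructor
    · apply pow_nonneg
      nlinarith
    · refine pow_le_pow_left₀ (by nlinarith) (by nlinarith) _
  · -- distinct edge sets: value is 0
    have hex : ∃ e', (e' ∈ A ∧ e' ∉ B) ∨ (e' ∈ B ∧ e' ∉ A) := by
      by_contra hcon
      push_neg at hcon
      exact hS (Finset.ext fun e' => ⟨(hcon e').1, (hcon e').2⟩)
    obtain ⟨e', he'⟩ := hex
    have hval : (∏ e' ∈ A ∪ B, (p * (1-p)^((if e' ∈ A then 1 else 0) + (if e' ∈ B then 1 else 0))
          + (1-p) * (-p)^((if e' ∈ A then 1 else 0) + (if e' ∈ B then 1 else 0)))) = 0 := by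
      rcases he' with ⟨hA', hB'⟩ | ⟨hB', hA'⟩
      · refine Finset.prod_eq_zero (Finset.mem_union_left _ hA') ?_
        rw [if_pos hA', if_neg hB']
        ring
      · refine Finset.prod_eq_zero (Finset.mem_union_right _ hB') ?_
        rw [if_neg hA', if_pos hB']
        ring
    rw [hval, if_neg (fun hcon => hS hcon.2.2)]
    exact ⟨le_refl _, le_refl _⟩

lemma card_fix (x y : Fin t) (hxy : x ≠ y) (i j : Fin n) :
    (univ.filter (fun f : Fin t ↪ Fin n => f x = i ∧ f y = j)).card ≤ n ^ (t - 2) := by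
  have hcard : Fintype.card {z : Fin t // z ≠ x ∧ z ≠ y} = t - 2 := by
    rw [Fintype.card_subtype]
    have : (univ.filter fun z : Fin t => z ≠ x ∧ z ≠ y) = univ \ {x, y} := by
      ext z; simp [and_comm]
    rw [this, Finset.card_sdiff_of_subset (by simp)]
    simp [Finset.card_insert_of_notMem, hxy]
  refine le_trans (Finset.card_le_card_of_injOn
      (s := univ.filter (fun f : Fin t ↪ Fin n => f x = i ∧ f y = j))
      (t := (univ : Finset ({z : Fin t // z ≠ x ∧ z ≠ y} → Fin n)))
      (fun (f : Fin t ↪ Fin n) (z : {z : Fin t // z ≠ x ∧ z ≠ y}) => f z.1)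
      (fun f _ => Finset.mem_univ _) ?_) ?_
  · intro f hf g hg hfg
    simp only [Finset.coe_filter, Set.mem_setOf_eq, Finset.mem_univ, true_and] at hf hg
    ext z
    by_cases hzx : z = x
    · rw [hzx, hf.1, hg.1]
    by_cases hzy : z = y
    · rw [hzy, hf.2, hg.2]
    · exact congrArg Fin.val (congrFun hfg ⟨z, hzx, hzy⟩)
  · rw [Finset.card_univ, Fintype.card_fun, hcard, Fintype.card_fin]

lemma card_T (F : SimpleGraph (Fin t)) (i j : Fin n) :
    (univ.filter (fun f : Fin t ↪ Fin n =>
        ∃ e0 ∈ F.edgeFinset, Sym2.map f e0 = s(i,j))).card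
      ≤ (t * t) * n ^ (t - 2) := by
  have hsub : (univ.filter (fun f : Fin t ↪ Fin n =>
        ∃ e0 ∈ F.edgeFinset, Sym2.map f e0 = s(i,j)))
      ⊆ (univ.offDiag).biUnion (fun q : Fin t × Fin t =>
          univ.filter (fun f : Fin t ↪ Fin n => f q.1 = i ∧ f q.2 = j)) := by
    intro f hf
    simp only [Finset.mem_filter, Finset.mem_univ, true_and] at hf
    obtain ⟨e0, he0, h0⟩ := hf
    revert he0 h0
    induction e0 using Sym2.ind with
    | _ x y =>
      intro he0 h0
      have hxy : x ≠ y := by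
        intro h
        exact (F.not_isDiag_of_mem_edgeSet (SimpleGraph.mem_edgeFinset.mp he0)) (by simp [h])
      rw [Sym2.map_pair_eq, Sym2.eq_iff] at h0
      rcases h0 with ⟨ha, hb⟩ | ⟨ha, hb⟩
      · exact Finset.mem_biUnion.mpr ⟨(x, y), by simp [Finset.mem_offDiag, hxy],
          by simp [ha, hb]⟩
      · exact Finset.mem_biUnion.mpr ⟨(y, x), by simp [Finset.mem_offDiag, hxy.symm],
          by simp [ha, hb]⟩
  calc _ ≤ _ := Finset.card_le_card hsub
    _ ≤ ∑ q ∈ univ.offDiag, (univ.filter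
          (fun f : Fin t ↪ Fin n => f q.1 = i ∧ f q.2 = j)).card := Finset.card_biUnion_le
    _ ≤ ∑ _q ∈ (univ : Finset (Fin t)).offDiag, n ^ (t - 2) := by
        refine Finset.sum_le_sum fun q hq => ?_
        exact card_fix q.1 q.2 (Finset.mem_offDiag.mp hq).2.2 i j
    _ = (univ : Finset (Fin t)).offDiag.card * n ^ (t - 2) := by
        rw [Finset.sum_const, smul_eq_mul]
    _ ≤ (t * t) * n ^ (t - 2) := by
        refine Nat.mul_le_mul_right _ ?_
        rw [Finset.offDiag_card]
        simp only [Finset.card_univ, Fintype.card_fin]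
        omega

lemma exists_iso (F : SimpleGraph (Fin t)) (hiso : ∀ v : Fin t, ∃ w, F.Adj v w)
    (f g : Fin t ↪ Fin n)
    (h : F.edgeFinset.image (Sym2.map f) = F.edgeFinset.image (Sym2.map g)) :
    ∃ σ : F ≃g F, ∀ v, f (σ v) = g v := by
  have hrange : ∀ v : Fin t, ∃ x, f x = g v := by
    intro v
    obtain ⟨w, hw⟩ := hiso v
    have hm : Sym2.map g s(v,w) ∈ F.edgeFinset.image (Sym2.map f) := by
      rw [h]; exact Finset.mem_image_of_mem _ (by simp [SimpleGraph.mem_edgeFinset, hw])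
    obtain ⟨e, he, hee⟩ := Finset.mem_image.mp hm
    revert he hee
    induction e using Sym2.ind with
    | _ x y =>
      intro he hee
      rw [Sym2.map_pair_eq, Sym2.map_pair_eq, Sym2.eq_iff] at hee
      rcases hee with ⟨h1, _⟩ | ⟨_, h2⟩
      · exact ⟨x, h1⟩
      · exact ⟨y, h2⟩
  have hsig : ∀ v, f (Classical.choose (hrange v)) = g v :=
    fun v => Classical.choose_spec (hrange v)
  set σ0 : Fin t → Fin t := fun v => Classical.choose (hrange v) with hσ0
  have hinj : Function.Injective σ0 := by
    intro a b hab
    apply g.injective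
    rw [← hsig a, ← hsig b]
    exact congrArg _ hab
  have hbij := Finite.injective_iff_bijective.mp hinj
  have hmono : ∀ a b : Fin t, F.Adj a b → F.Adj (σ0 a) (σ0 b) := by
    intro a b hab
    have hm : Sym2.map g s(a,b) ∈ F.edgeFinset.image (Sym2.map f) := by
      rw [h]; exact Finset.mem_image_of_mem _ (by simp [SimpleGraph.mem_edgeFinset, hab])
    obtain ⟨e, he, hee⟩ := Finset.mem_image.mp hm
    have h2 : Sym2.map f e = Sym2.map f s(σ0 a, σ0 b) := by
      rw [hee]; simp [Sym2.map_pair_eq, hsig]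
      exact Or.inl ⟨(hsig a).symm, (hsig b).symm⟩
    have he2 : e = s(σ0 a, σ0 b) := Sym2.map.injective f.injective h2
    rw [he2] at he
    simpa [SimpleGraph.mem_edgeFinset] using he
  have himg : F.edgeFinset.image (Sym2.map σ0) = F.edgeFinset := by
    apply Finset.eq_of_subset_of_card_le
    · intro e' he'
      obtain ⟨e, he, rfl⟩ := Finset.mem_image.mp he'
      revert he
      induction e using Sym2.ind with
      | _ a b =>
        intro he
        rw [Sym2.map_pair_eq]
        simpa [SimpleGraph.mem_edgeFinset] using
          hmono a b (by simpa [SimpleGraph.mem_edgeFinset] using he)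
    · rw [Finset.card_image_of_injective _ (Sym2.map.injective hinj)]
  have hadj : ∀ a b : Fin t, F.Adj (σ0 a) (σ0 b) → F.Adj a b := by
    intro a b hab
    have hm : s(σ0 a, σ0 b) ∈ F.edgeFinset.image (Sym2.map σ0) := by
      rw [himg]; simpa [SimpleGraph.mem_edgeFinset] using hab
    obtain ⟨e, he, hee⟩ := Finset.mem_image.mp hm
    have he2 : e = s(a, b) := Sym2.map.injective hinj (by rw [hee, Sym2.map_pair_eq])
    rw [he2] at he
    simpa [SimpleGraph.mem_edgeFinset] using he
  exact ⟨⟨Equiv.ofBijective σ0 hbij, fun {a b} => ⟨hadj a b, hmono a b⟩⟩, hsig⟩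

lemma aut_finite (F : SimpleGraph (Fin t)) : Finite (F ≃g F) :=
  Finite.of_injective (fun φ : F ≃g F => φ.toEquiv)
    (fun a b hab => by cases a; cases b; simpa using hab)

lemma count_aut (F : SimpleGraph (Fin t)) (hiso : ∀ v : Fin t, ∃ w, F.Adj v w)
    (f : Fin t ↪ Fin n) (i j : Fin n)
    (hf : ∃ e0 ∈ F.edgeFinset, Sym2.map f e0 = s(i,j)) :
    (univ.filter (fun g : Fin t ↪ Fin n =>
      (∃ e0 ∈ F.edgeFinset, Sym2.map g e0 = s(i,j)) ∧ Sf F i j f = Sf F i j g)).card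
      ≤ Nat.card (F ≃g F) := by
  have hfin : Finite (F ≃g F) := aut_finite F
  have : Fintype (F ≃g F) := Fintype.ofFinite _
  rw [Nat.card_eq_fintype_card, ← Finset.card_univ]
  have hEins : ∀ g : Fin t ↪ Fin n, (∃ e0 ∈ F.edgeFinset, Sym2.map g e0 = s(i,j)) →
      F.edgeFinset.image (Sym2.map g) = insert s(i,j) (Sf F i j g) := by
    intro g ⟨e0, he0, h0⟩
    rw [Sf, Finset.insert_erase]
    rw [← h0]
    exact Finset.mem_image_of_mem _ he0
  refine Finset.card_le_card_of_injOn
    (fun g : Fin t ↪ Fin n =>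
      if hg : ∃ σ : F ≃g F, ∀ v, f (σ v) = g v then hg.choose else RelIso.refl _)
    (fun g _ => Finset.mem_univ _) ?_
  intro g1 hg1 g2 hg2 heq
  simp only [Finset.coe_filter, Set.mem_setOf_eq, Finset.mem_univ, true_and] at hg1 hg2
  have hex : ∀ g : Fin t ↪ Fin n,
      (∃ e0 ∈ F.edgeFinset, Sym2.map g e0 = s(i,j)) ∧ Sf F i j f = Sf F i j g →
      ∃ σ : F ≃g F, ∀ v, f (σ v) = g v := by
    intro g ⟨hP, hS⟩
    apply exists_iso F hiso f g
    rw [hEins f hf, hEins g hP, hS]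
  have h1 := hex g1 hg1
  have h2 := hex g2 hg2
  simp only [dif_pos h1, dif_pos h2] at heq
  have s1 := h1.choose_spec
  have s2 := h2.choose_spec
  apply DFunLike.ext
  intro v
  rw [← s1 v, ← s2 v, heq]

end Aux

/-- for `F` with no isolated vertices and `3 ≤ v(F) = t ≤ k`, and a fixed
pair `ij`, one has `E[S_{ij}(F,G(n,p))] = 0` and
`E[S_{ij}(F,G(n,p))²] ≤ k² p^{e(F)−1} n^{t−2}`. -/
theorem ERexp_Sij {n t k : ℕ} (p : ℝ) (hp0 : 0 < p) (hp1 : p < 1)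
    (F : SimpleGraph (Fin t)) (hiso : ∀ v : Fin t, ∃ w, F.Adj v w)
    (ht3 : 3 ≤ t) (htk : t ≤ k) (i j : Fin n) (hij : i ≠ j) :
    ERexp n p (fun G => Sij G p F i j) = 0 ∧
    ERexp n p (fun G => (Sij G p F i j) ^ 2) ≤
      (k : ℝ) ^ 2 * p ^ (F.edgeFinset.card - 1) * (n : ℝ) ^ (t - 2) := by
  have hfin : Finite (F ≃g F) := aut_finite F
  have hc1 : 1 ≤ (Nat.card (F ≃g F) : ℝ) := by
    have : 0 < Nat.card (F ≃g F) := Nat.card_pos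
    exact_mod_cast this
  have hcpos : (0:ℝ) < (Nat.card (F ≃g F) : ℝ) := lt_of_lt_of_le one_pos hc1
  constructor
  · -- first moment
    have hfun : (fun G : SimpleGraph (Fin n) => Sij G p F i j)
        = fun G => (∑ f : Fin t ↪ Fin n, Dterm G p F i j f) / (Nat.card (F ≃g F)) :=
      funext fun G => Sij_eq G p F i j
    rw [hfun, ERexp_sum_div]
    simp only [ERexp_Dterm_eq_zero p F hiso ht3 i j hij]
    simp
  · -- second moment
    have hfun2 : (fun G : SimpleGraph (Fin n) => (Sij G p F i j) ^ 2)
        = fun G => (∑ q : (Fin t ↪ Fin n) × (Fin t ↪ Fin n),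
              Dterm G p F i j q.1 * Dterm G p F i j q.2) /
            ((Nat.card (F ≃g F) : ℝ) * (Nat.card (F ≃g F) : ℝ)) := by
      funext G
      have hpair : (∑ q : (Fin t ↪ Fin n) × (Fin t ↪ Fin n),
            Dterm G p F i j q.1 * Dterm G p F i j q.2)
          = (∑ f : Fin t ↪ Fin n, Dterm G p F i j f) *
            (∑ g : Fin t ↪ Fin n, Dterm G p F i j g) := by
        rw [Fintype.sum_prod_type, ← Finset.sum_mul_sum]
      rw [Sij_eq G p F i j, sq, div_mul_div_comm, ← hpair]
    rw [hfun2, ERexp_sum_div]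
    set c : ℝ := (Nat.card (F ≃g F) : ℝ)
    set M : ℕ := F.edgeFinset.card
    set T := univ.filter (fun f : Fin t ↪ Fin n =>
      ∃ e0 ∈ F.edgeFinset, Sym2.map f e0 = s(i,j)) with hT
    have hppos : (0:ℝ) < p ^ (M - 1) := pow_pos hp0 _
    have hbound : (∑ q : (Fin t ↪ Fin n) × (Fin t ↪ Fin n),
        ERexp n p (fun G => Dterm G p F i j q.1 * Dterm G p F i j q.2))
        ≤ (T.card : ℝ) * (c * p ^ (M - 1)) := by
      calc (∑ q : (Fin t ↪ Fin n) × (Fin t ↪ Fin n),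
            ERexp n p (fun G => Dterm G p F i j q.1 * Dterm G p F i j q.2))
          ≤ ∑ q : (Fin t ↪ Fin n) × (Fin t ↪ Fin n),
              (if (∃ e0 ∈ F.edgeFinset, Sym2.map q.1 e0 = s(i,j)) ∧
                  ((∃ e0 ∈ F.edgeFinset, Sym2.map q.2 e0 = s(i,j)) ∧
                    Sf F i j q.1 = Sf F i j q.2)
                then p ^ (M - 1) else (0:ℝ)) := by
            refine Finset.sum_le_sum fun q _ => ?_
            exact (ERexp_Dmul_bound p hp0 hp1 F hiso ht3 i j hij q.1 q.2).2
        _ = ∑ f : Fin t ↪ Fin n, ∑ g : Fin t ↪ Fin n,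
              (if (∃ e0 ∈ F.edgeFinset, Sym2.map f e0 = s(i,j)) ∧
                  ((∃ e0 ∈ F.edgeFinset, Sym2.map g e0 = s(i,j)) ∧
                    Sf F i j f = Sf F i j g)
                then p ^ (M - 1) else (0:ℝ)) := by rw [Fintype.sum_prod_type]
        _ ≤ ∑ f : Fin t ↪ Fin n,
              (if (∃ e0 ∈ F.edgeFinset, Sym2.map f e0 = s(i,j))
                then c * p ^ (M - 1) else (0:ℝ)) := by
            refine Finset.sum_le_sum fun f _ => ?_
            by_cases hPf : ∃ e0 ∈ F.edgeFinset, Sym2.map f e0 = s(i,j)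
            · rw [if_pos hPf]
              have hrw : ∀ g : Fin t ↪ Fin n,
                  (if (∃ e0 ∈ F.edgeFinset, Sym2.map f e0 = s(i,j)) ∧
                      ((∃ e0 ∈ F.edgeFinset, Sym2.map g e0 = s(i,j)) ∧
                        Sf F i j f = Sf F i j g)
                    then p ^ (M - 1) else (0:ℝ))
                  = (if ((∃ e0 ∈ F.edgeFinset, Sym2.map g e0 = s(i,j)) ∧
                        Sf F i j f = Sf F i j g)
                    then p ^ (M - 1) else (0:ℝ)) := by
                intro g
                by_cases hg : ((∃ e0 ∈ F.edgeFinset, Sym2.map g e0 = s(i,j)) ∧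
                    Sf F i j f = Sf F i j g)
                · rw [if_pos hg, if_pos ⟨hPf, hg⟩]
                · rw [if_neg hg, if_neg (fun hcon => hg hcon.2)]
              simp only [hrw]
              rw [← Finset.sum_filter, Finset.sum_const, nsmul_eq_mul]
              refine mul_le_mul_of_nonneg_right ?_ (le_of_lt hppos)
              exact Nat.cast_le.mpr (count_aut F hiso f i j hPf)
            · rw [if_neg hPf]
              exact le_of_eq (Finset.sum_eq_zero fun g _ => if_neg (fun hcon => hPf hcon.1))
        _ = (T.card : ℝ) * (c * p ^ (M - 1)) := by
            rw [← Finset.sum_filter, ← hT, Finset.sum_const, nsmul_eq_mul]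
    have hc0 : c ≠ 0 := ne_of_gt hcpos
    have hn0 : (0:ℝ) ≤ (n:ℝ) ^ (t - 2) := by positivity
    calc (∑ q : (Fin t ↪ Fin n) × (Fin t ↪ Fin n),
          ERexp n p (fun G => Dterm G p F i j q.1 * Dterm G p F i j q.2)) / (c * c)
        ≤ ((T.card : ℝ) * (c * p ^ (M - 1))) / (c * c) := by
          gcongr
      _ = (T.card : ℝ) * p ^ (M - 1) / c := by
          field_simp
      _ ≤ (T.card : ℝ) * p ^ (M - 1) := by
          exact div_le_self (by positivity) hc1
      _ ≤ ((t:ℝ) * t * (n:ℝ) ^ (t - 2)) * p ^ (M - 1) := by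
          have h1 : (T.card : ℝ) ≤ (t:ℝ) * t * (n:ℝ) ^ (t - 2) := by
            calc (T.card : ℝ) ≤ (((t * t) * n ^ (t - 2) : ℕ) : ℝ) := by
                  exact_mod_cast card_T F i j
              _ = (t:ℝ) * t * (n:ℝ) ^ (t - 2) := by push_cast; ring
          exact mul_le_mul_of_nonneg_right h1 (le_of_lt hppos)
      _ ≤ (k : ℝ) ^ 2 * p ^ (M - 1) * (n : ℝ) ^ (t - 2) := by
          have hk : (t:ℝ) ≤ (k:ℝ) := by exact_mod_cast htk
          have ht0 : (0:ℝ) ≤ (t:ℝ) := by positivity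
          have htt : (t:ℝ) * t ≤ (k:ℝ) ^ 2 := by nlinarith
          nlinarith [mul_le_mul_of_nonneg_right htt
            (mul_nonneg hn0 (le_of_lt hppos))]
end

section
/- For every integer k ≥ 2 there exists a constant c_k > 0 such that for every graph G on n ≥ k+1 vertices and every p ∈ (0,1), u_{k+1}(G,p) ≥ c_k · n · u_k(G,p), where u_k(G,p) = max over k-vertex graphs F of |N(F,G) − E[N(F,G(n,p))]|. -/
open scoped Classical
open SimpleGraph

variable {α β : Type*}

instance finiteIso [Finite α] (G : SimpleGraph α) (H : SimpleGraph β) : Finite (G ≃g H) := by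
  cases isEmpty_or_nonempty (G ≃g H) with
  | inl h => infer_instance
  | inr h =>
    obtain ⟨e⟩ := h
    have : Finite β := Finite.of_equiv α e.toEquiv
    have : Finite (α ≃ β) := inferInstance
    exact Finite.of_injective (fun e : G ≃g H => e.toEquiv)
      (fun a b h => by cases a; cases b; simpa using h)

lemma autCard_pos {k : ℕ} (F : SimpleGraph (Fin k)) : 0 < Nat.card (F ≃g F) := by
  have : Nonempty (F ≃g F) := ⟨Iso.refl⟩
  exact Nat.card_pos

lemma card_edgeFinset_iso [Fintype α] [Fintype β] {G : SimpleGraph α} {H : SimpleGraph β}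
    (e : G ≃g H) : G.edgeFinset.card = H.edgeFinset.card := by
  rw [SimpleGraph.edgeFinset_card, SimpleGraph.edgeFinset_card]
  exact Fintype.card_congr e.mapEdgeSet

/-- An isomorphism restricts to induced subgraphs. -/
def isoInduce {G : SimpleGraph α} {H : SimpleGraph β} (e : G ≃g H) (A : Set α) :
    G.induce A ≃g H.induce (e '' A) where
  toEquiv := e.toEquiv.image A
  map_rel_iff' := by
    intro x y
    simp [Equiv.image, SimpleGraph.comap, e.map_adj_iff]

/-- Induce is "transitive" along a subset inclusion. -/
def induceInduce (G : SimpleGraph α) {A B : Set α} (h : B ⊆ A) :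
    (G.induce A).induce {x : A | (x : α) ∈ B} ≃g G.induce B where
  toEquiv :=
    { toFun := fun x => ⟨(x : α), x.2⟩
      invFun := fun b => ⟨⟨(b : α), h b.2⟩, b.2⟩
      left_inv := fun x => by ext; rfl
      right_inv := fun b => by ext; rfl }
  map_rel_iff' := by intro x y; rfl

lemma nonempty_iso_congr {A : SimpleGraph α} {B : SimpleGraph β} {F : SimpleGraph γ}
    (e : A ≃g B) : Nonempty (A ≃g F) ↔ Nonempty (B ≃g F) :=
  ⟨fun ⟨i⟩ => ⟨e.symm.trans i⟩, fun ⟨i⟩ => ⟨e.trans i⟩⟩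

/-- number of vertices whose deletion from `H` yields a graph isomorphic to `F`. -/
noncomputable def dstar {k m : ℕ} (F : SimpleGraph (Fin k)) (H : SimpleGraph (Fin m)) : ℕ :=
  (Finset.univ.filter fun w : Fin m =>
    Nonempty ((H.induce ({w}ᶜ : Set (Fin m))) ≃g F)).card

lemma image_compl_singleton {δ : Type*} {f : α → δ} (hf : Function.Bijective f) (a : α) :
    f '' ({a}ᶜ : Set α) = ({f a}ᶜ : Set δ) := by
  rw [Set.image_compl_eq hf, Set.image_singleton]

lemma erase_iso_iff {n k m : ℕ} (G : SimpleGraph (Fin n)) (F : SimpleGraph (Fin k))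
    {H : SimpleGraph (Fin m)} (s : Finset (Fin n)) (v : Fin n) (hv : v ∈ s)
    (e : G.induce (s : Set (Fin n)) ≃g H) :
    Nonempty (G.induce ((s.erase v : Finset (Fin n)) : Set (Fin n)) ≃g F) ↔
      Nonempty ((H.induce ({e ⟨v, hv⟩}ᶜ : Set (Fin m))) ≃g F) := by
  have hsub : ((s.erase v : Finset (Fin n)) : Set (Fin n)) ⊆ (s : Set (Fin n)) := by
    intro x hx
    exact Finset.mem_coe.2 (Finset.mem_of_mem_erase (Finset.mem_coe.1 hx))
  have i1 : G.induce ((s.erase v : Finset (Fin n)) : Set (Fin n)) ≃g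
      (G.induce (s : Set (Fin n))).induce
        {x : (s : Set (Fin n)) | (x : Fin n) ∈ ((s.erase v : Finset (Fin n)) : Set (Fin n))} :=
    (induceInduce G hsub).symm
  have hset : {x : (s : Set (Fin n)) | (x : Fin n) ∈ ((s.erase v : Finset (Fin n)) : Set (Fin n))}
      = ({(⟨v, hv⟩ : (s : Set (Fin n)))}ᶜ : Set (s : Set (Fin n))) := by
    ext x
    simp only [Set.mem_setOf_eq, Finset.coe_erase, Set.mem_diff, Set.mem_compl_iff,
      Set.mem_singleton_iff]
    constructor
    · rintro ⟨-, hxv⟩ h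
      exact hxv (congrArg Subtype.val h)
    · intro h
      exact ⟨x.2, fun hxv => h (Subtype.ext hxv)⟩
  have i2 := isoInduce e {x : (s : Set (Fin n)) |
      (x : Fin n) ∈ ((s.erase v : Finset (Fin n)) : Set (Fin n))}
  rw [hset, image_compl_singleton e.bijective] at i2
  rw [hset] at i1
  exact nonempty_iso_congr (i1.trans i2)

lemma dstar_eq_of_iso {n k m : ℕ} (G : SimpleGraph (Fin n)) (F : SimpleGraph (Fin k))
    {H : SimpleGraph (Fin m)} (s : Finset (Fin n))
    (e : G.induce (s : Set (Fin n)) ≃g H) :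
    (s.filter fun v => Nonempty
        (G.induce ((s.erase v : Finset (Fin n)) : Set (Fin n)) ≃g F)).card = dstar F H := by
  classical
  refine Finset.card_bij' (fun v hv => e ⟨v, (Finset.mem_filter.1 hv).1⟩)
    (fun w _ => ((e.symm w : (s : Set (Fin n))) : Fin n)) ?_ ?_ ?_ ?_
  · intro v hv
    obtain ⟨hvs, hne⟩ := Finset.mem_filter.1 hv
    refine Finset.mem_filter.2 ⟨Finset.mem_univ _, ?_⟩
    exact (erase_iso_iff G F s v hvs e).1 hne
  · intro w hw
    obtain ⟨-, hne⟩ := Finset.mem_filter.1 hw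
    have hmem : ((e.symm w : (s : Set (Fin n))) : Fin n) ∈ s := (e.symm w).2
    refine Finset.mem_filter.2 ⟨hmem, ?_⟩
    have hx : (⟨((e.symm w : (s : Set (Fin n))) : Fin n), hmem⟩ : (s : Set (Fin n)))
        = e.symm w := by ext; rfl
    rw [erase_iso_iff G F s _ hmem e, hx, RelIso.apply_symm_apply]
    exact hne
  · intro v hv
    show ((e.symm (e ⟨v, _⟩) : (s : Set (Fin n))) : Fin n) = v
    rw [RelIso.symm_apply_apply]
  · intro w hw
    show e ⟨((e.symm w : (s : Set (Fin n))) : Fin n), _⟩ = w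
    have hx : (⟨((e.symm w : (s : Set (Fin n))) : Fin n), (e.symm w).2⟩ : (s : Set (Fin n)))
        = e.symm w := by ext; rfl
    rw [hx, RelIso.apply_symm_apply]

lemma dstar_congr {k m : ℕ} (F : SimpleGraph (Fin k)) {H H' : SimpleGraph (Fin m)}
    (e : H ≃g H') : dstar F H = dstar F H' := by
  classical
  unfold dstar
  refine Finset.card_bij' (fun w _ => e w) (fun w _ => e.symm w) ?_ ?_ ?_ ?_
  · intro w hw
    obtain ⟨-, hne⟩ := Finset.mem_filter.1 hw
    refine Finset.mem_filter.2 ⟨Finset.mem_univ _, ?_⟩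
    have i2 := isoInduce e ({w}ᶜ : Set (Fin m))
    rw [image_compl_singleton e.bijective] at i2
    exact (nonempty_iso_congr i2).1 hne
  · intro w hw
    obtain ⟨-, hne⟩ := Finset.mem_filter.1 hw
    refine Finset.mem_filter.2 ⟨Finset.mem_univ _, ?_⟩
    have i2 := isoInduce e.symm ({w}ᶜ : Set (Fin m))
    rw [image_compl_singleton e.symm.bijective] at i2
    exact (nonempty_iso_congr i2).1 hne
  · intro w _; exact e.symm_apply_apply w
  · intro w _; exact e.apply_symm_apply w

noncomputable def Ncount {k n : ℕ} (F : SimpleGraph (Fin k)) (G : SimpleGraph (Fin n)) : ℕ :=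
  (Finset.univ.filter fun s : Finset (Fin n) =>
    Nonempty ((G.induce (s : Set (Fin n))) ≃g F)).card

lemma card_of_iso {n k : ℕ} {G : SimpleGraph (Fin n)} {F : SimpleGraph (Fin k)}
    {t : Finset (Fin n)} (h : Nonempty (G.induce (t : Set (Fin n)) ≃g F)) : t.card = k := by
  obtain ⟨e⟩ := h
  have := Fintype.card_congr e.toEquiv
  simpa using this

lemma double_count {n k : ℕ} (G : SimpleGraph (Fin n)) (F : SimpleGraph (Fin k)) :
    ∑ s ∈ Finset.univ.powersetCard (k+1),
      (s.filter fun v =>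
        Nonempty (G.induce ((s.erase v : Finset (Fin n)) : Set (Fin n)) ≃g F)).card
    = (n - k) * Ncount F G := by
  classical
  rw [← Finset.card_sigma]
  have hr : (n - k) * Ncount F G =
      ((Finset.univ.filter fun t : Finset (Fin n) =>
        Nonempty ((G.induce (t : Set (Fin n))) ≃g F)).sigma fun t => Finset.univ \ t).card := by
    rw [Finset.card_sigma]
    rw [Finset.sum_congr rfl (fun t ht => by
      rw [Finset.card_sdiff_of_subset (Finset.subset_univ t), Finset.card_univ, Fintype.card_fin,
        card_of_iso (Finset.mem_filter.1 ht).2])]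
    rw [Finset.sum_const, smul_eq_mul, mul_comm]
    rfl
  rw [hr]
  refine Finset.card_bij' (fun x _ => ⟨x.1.erase x.2, x.2⟩) (fun x _ => ⟨insert x.2 x.1, x.2⟩)
    ?_ ?_ ?_ ?_
  · rintro ⟨s, v⟩ hx
    obtain ⟨hs, hv⟩ := Finset.mem_sigma.1 hx
    obtain ⟨hvs, hne⟩ := Finset.mem_filter.1 hv
    refine Finset.mem_sigma.2 ⟨Finset.mem_filter.2 ⟨Finset.mem_univ _, hne⟩, ?_⟩
    simp [Finset.mem_sdiff]
  · rintro ⟨t, v⟩ hx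
    obtain ⟨ht, hv⟩ := Finset.mem_sigma.1 hx
    have hne := (Finset.mem_filter.1 ht).2
    have hvt : v ∉ t := (Finset.mem_sdiff.1 hv).2
    refine Finset.mem_sigma.2 ⟨?_, ?_⟩
    · refine Finset.mem_powersetCard_univ.2 ?_
      rw [Finset.card_insert_of_notMem hvt, card_of_iso hne]
    · refine Finset.mem_filter.2 ⟨Finset.mem_insert_self _ _, ?_⟩
      rw [Finset.erase_insert hvt]
      exact hne
  · rintro ⟨s, v⟩ hx
    obtain ⟨hs, hv⟩ := Finset.mem_sigma.1 hx
    have hvs : v ∈ s := (Finset.mem_filter.1 hv).1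
    simp [Finset.insert_erase hvs]
  · rintro ⟨t, v⟩ hx
    obtain ⟨ht, hv⟩ := Finset.mem_sigma.1 hx
    have hvt : v ∉ t := (Finset.mem_sdiff.1 hv).2
    simp [Finset.erase_insert hvt]

lemma exists_rep {n k : ℕ} (G : SimpleGraph (Fin n)) {s : Finset (Fin n)} (h : s.card = k) :
    ∃ H : SimpleGraph (Fin k), Nonempty (G.induce (s : Set (Fin n)) ≃g H) := by
  have hc : Fintype.card ((s : Set (Fin n)) : Type) = k := by simpa using h
  let ε : ((s : Set (Fin n)) : Type) ≃ Fin k := Fintype.equivFinOfCardEq hc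
  exact ⟨(G.induce (s : Set (Fin n))).comap ε.symm.toEmbedding,
    ⟨(Iso.comap ε.symm (G.induce (s : Set (Fin n)))).symm⟩⟩

variable {k : ℕ}

/-- Extend a graph on `Fin k` by one vertex (`Fin.last k`) with neighborhood `T`. -/
noncomputable def ExtG (H : SimpleGraph (Fin k)) (T : Finset (Fin k)) : SimpleGraph (Fin (k+1)) where
  Adj x y :=
    (∃ (hx : x ≠ Fin.last k) (hy : y ≠ Fin.last k), H.Adj (x.castPred hx) (y.castPred hy)) ∨
    (x = Fin.last k ∧ ∃ hy : y ≠ Fin.last k, y.castPred hy ∈ T) ∨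
    (y = Fin.last k ∧ ∃ hx : x ≠ Fin.last k, x.castPred hx ∈ T)
  symm := by
    refine ⟨?_⟩
    rintro x y (⟨hx, hy, h⟩ | ⟨hx, hy, h⟩ | ⟨hy, hx, h⟩)
    · exact Or.inl ⟨hy, hx, h.symm⟩
    · exact Or.inr (Or.inr ⟨hx, hy, h⟩)
    · exact Or.inr (Or.inl ⟨hy, hx, h⟩)
  loopless := by
    refine ⟨?_⟩
    rintro x (⟨hx, hy, h⟩ | ⟨hx, hy, -⟩ | ⟨hx, hy, -⟩)
    · exact H.loopless.irrefl _ h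
    · exact hy hx
    · exact hy hx

lemma ext_adj_castSucc {H : SimpleGraph (Fin k)} {T : Finset (Fin k)} (a b : Fin k) :
    (ExtG H T).Adj a.castSucc b.castSucc ↔ H.Adj a b := by
  constructor
  · rintro (⟨hx, hy, h⟩ | ⟨hx, -⟩ | ⟨hy, -⟩)
    · simpa using h
    · exact absurd hx (Fin.castSucc_lt_last a).ne
    · exact absurd hy (Fin.castSucc_lt_last b).ne
  · intro h
    exact Or.inl ⟨(Fin.castSucc_lt_last a).ne, (Fin.castSucc_lt_last b).ne, by simpa using h⟩

lemma ext_adj_last {H : SimpleGraph (Fin k)} {T : Finset (Fin k)} (a : Fin k) :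
    (ExtG H T).Adj a.castSucc (Fin.last k) ↔ a ∈ T := by
  constructor
  · rintro (⟨-, hy, -⟩ | ⟨hx, -⟩ | ⟨-, hx, h⟩)
    · exact absurd rfl hy
    · exact absurd hx (Fin.castSucc_lt_last a).ne
    · simpa using h
  · intro h
    exact Or.inr (Or.inr ⟨rfl, (Fin.castSucc_lt_last a).ne, by simpa using h⟩)

/-- `ExtG` is a bijection between pairs and graphs on one more vertex. -/
noncomputable def extEquiv : SimpleGraph (Fin k) × Finset (Fin k) ≃ SimpleGraph (Fin (k+1)) where
  toFun x := ExtG x.1 x.2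
  invFun H' := (H'.comap Fin.castSucc,
    Finset.univ.filter fun a : Fin k => H'.Adj a.castSucc (Fin.last k))
  left_inv := by
    rintro ⟨H, T⟩
    refine Prod.ext ?_ ?_
    · ext a b
      exact ext_adj_castSucc a b
    · ext a
      simp [ext_adj_last]
  right_inv := by
    intro H'
    ext x y
    show ((∃ (hx : x ≠ Fin.last k) (hy : y ≠ Fin.last k),
        H'.Adj (x.castPred hx).castSucc (y.castPred hy).castSucc) ∨ _) ↔ H'.Adj x y
    rcases eq_or_ne x (Fin.last k) with hx | hx
    · rcases eq_or_ne y (Fin.last k) with hy | hy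
      · subst hx; subst hy
        simp only [ne_eq, not_true_eq_false]
        constructor
        · rintro (⟨h, -⟩ | ⟨-, h, -⟩ | ⟨-, h, -⟩) <;> exact h.elim
        · intro h; exact (H'.loopless.irrefl _ h).elim
      · subst hx
        constructor
        · rintro (⟨h, -⟩ | ⟨-, hy', h⟩ | ⟨h, -⟩)
          · exact absurd rfl h
          · have := (Finset.mem_filter.1 h).2
            rw [Fin.castSucc_castPred] at this
            exact this.symm
          · exact absurd h hy
        · intro h
          refine Or.inr (Or.inl ⟨rfl, hy, ?_⟩)
          refine Finset.mem_filter.2 ⟨Finset.mem_univ _, ?_⟩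
          rw [Fin.castSucc_castPred]
          exact h.symm
    · rcases eq_or_ne y (Fin.last k) with hy | hy
      · subst hy
        constructor
        · rintro (⟨-, h, -⟩ | ⟨h, -⟩ | ⟨-, hx', h⟩)
          · exact absurd rfl h
          · exact absurd h hx
          · have := (Finset.mem_filter.1 h).2
            rwa [Fin.castSucc_castPred] at this
        · intro h
          refine Or.inr (Or.inr ⟨rfl, hx, ?_⟩)
          refine Finset.mem_filter.2 ⟨Finset.mem_univ _, ?_⟩
          rwa [Fin.castSucc_castPred]
      · constructor
        · rintro (⟨hx', hy', h⟩ | ⟨h, -⟩ | ⟨h, -⟩)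
          · rwa [Fin.castSucc_castPred, Fin.castSucc_castPred] at h
          · exact absurd h hx
          · exact absurd h hy
        · intro h
          exact Or.inl ⟨hx, hy, by rwa [Fin.castSucc_castPred, Fin.castSucc_castPred]⟩

/-- The restriction of `ExtG H T` to the complement of the new vertex is isomorphic to `H`. -/
noncomputable def extRestr (H : SimpleGraph (Fin k)) (T : Finset (Fin k)) :
    (ExtG H T).induce ({Fin.last k}ᶜ : Set (Fin (k+1))) ≃g H where
  toEquiv :=
    { toFun := fun x => (x : Fin (k+1)).castPred x.2
      invFun := fun a => ⟨a.castSucc, Set.mem_compl_singleton_iff.2 (Fin.castSucc_lt_last a).ne⟩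
      left_inv := fun x => Subtype.ext (Fin.castSucc_castPred _ _)
      right_inv := fun a => Fin.castPred_castSucc _ }
  map_rel_iff' := by
    intro x y
    show H.Adj _ _ ↔ (ExtG H T).Adj (x : Fin (k+1)) (y : Fin (k+1))
    have hx : (x : Fin (k+1)) ≠ Fin.last k := x.2
    have hy : (y : Fin (k+1)) ≠ Fin.last k := y.2
    constructor
    · intro h
      exact Or.inl ⟨hx, hy, h⟩
    · rintro (⟨hx', hy', h⟩ | ⟨h, -⟩ | ⟨h, -⟩)
      · exact h
      · exact absurd h hx
      · exact absurd h hy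

lemma extG_neighborFinset_last (H : SimpleGraph (Fin k)) (T : Finset (Fin k)) :
    (ExtG H T).neighborFinset (Fin.last k) = T.map Fin.castSuccEmb := by
  ext y
  rw [SimpleGraph.mem_neighborFinset, Finset.mem_map]
  constructor
  · rintro (⟨h, -⟩ | ⟨-, hy, h⟩ | ⟨-, h, -⟩)
    · exact absurd rfl h
    · exact ⟨y.castPred hy, h, by ext; simp⟩
    · exact absurd rfl h
  · rintro ⟨a, ha, rfl⟩
    exact Or.inr (Or.inl ⟨rfl, (Fin.castSucc_lt_last a).ne, by exact ha⟩)

lemma extG_neighborFinset_castSucc (H : SimpleGraph (Fin k)) (T : Finset (Fin k)) (a : Fin k) :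
    (ExtG H T).neighborFinset a.castSucc =
      (H.neighborFinset a).map Fin.castSuccEmb ∪ (if a ∈ T then {Fin.last k} else ∅) := by
  ext y
  rw [SimpleGraph.mem_neighborFinset, Finset.mem_union, Finset.mem_map]
  rcases eq_or_ne y (Fin.last k) with hy | hy
  · subst hy
    rw [ext_adj_last]
    constructor
    · intro h
      right
      simp [h]
    · rintro (⟨b, -, hb⟩ | h)
      · exact absurd hb (Fin.castSucc_lt_last b).ne
      · by_cases haT : a ∈ T
        · exact haT
        · simp [haT] at h
  · have hcp : y = (y.castPred hy).castSucc := by simp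
    rw [hcp, ext_adj_castSucc]
    constructor
    · intro h
      exact Or.inl ⟨y.castPred hy, (SimpleGraph.mem_neighborFinset _ _ _).2 h, by
        ext; simp⟩
    · rintro (⟨b, hb, hbe⟩ | h)
      · have hbb : b = y.castPred hy := by
          apply Fin.castSucc_injective
          rw [← hcp]; exact hbe
        subst hbb
        exact (SimpleGraph.mem_neighborFinset _ _ _).1 hb
      · by_cases haT : a ∈ T
        · simp only [haT, if_true, Finset.mem_singleton] at h
          exact absurd h hy
        · simp [haT] at h

lemma extG_card_edge (H : SimpleGraph (Fin k)) (T : Finset (Fin k)) :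
    (ExtG H T).edgeFinset.card = H.edgeFinset.card + T.card := by
  have key : 2 * (ExtG H T).edgeFinset.card = 2 * (H.edgeFinset.card + T.card) := by
    rw [← SimpleGraph.sum_degrees_eq_twice_card_edges, Fin.sum_univ_castSucc]
    have hlast : (ExtG H T).degree (Fin.last k) = T.card := by
      rw [SimpleGraph.degree, extG_neighborFinset_last, Finset.card_map]
    have hcs : ∀ a : Fin k, (ExtG H T).degree a.castSucc =
        H.degree a + (if a ∈ T then 1 else 0) := by
      intro a
      rw [SimpleGraph.degree, extG_neighborFinset_castSucc, Finset.card_union_of_disjoint, Finset.card_map]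
      · congr 1
        by_cases haT : a ∈ T <;> simp [haT]
      · rw [Finset.disjoint_right]
        intro y hy hmem
        obtain ⟨b, -, hb⟩ := Finset.mem_map.1 hmem
        by_cases haT : a ∈ T
        · simp only [haT, if_true, Finset.mem_singleton] at hy
          subst hy
          exact absurd hb (Fin.castSucc_lt_last b).ne
        · simp [haT] at hy
    rw [Finset.sum_congr rfl (fun a _ => hcs a), hlast, Finset.sum_add_distrib,
      SimpleGraph.sum_degrees_eq_twice_card_edges]
    have hT : (∑ a : Fin k, if a ∈ T then 1 else 0) = T.card := by
      simp [Finset.sum_ite_mem, Finset.inter_comm]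
    rw [hT]
    ring
  omega

variable {m : ℕ}

noncomputable instance permGraphAction (m : ℕ) :
    MulAction (Equiv.Perm (Fin m)) (SimpleGraph (Fin m)) where
  smul g H :=
    { Adj := fun x y => H.Adj (g⁻¹ x) (g⁻¹ y)
      symm := ⟨fun x y h => H.adj_symm h⟩
      loopless := ⟨fun x h => H.loopless.irrefl _ h⟩ }
  one_smul H := by
    ext x y
    show H.Adj _ _ ↔ H.Adj x y
    simp
  mul_smul g h H := by
    ext x y
    show H.Adj _ _ ↔ H.Adj _ _
    simp [mul_comm]

lemma permGraph_smul_adj (g : Equiv.Perm (Fin m)) (H : SimpleGraph (Fin m)) (x y : Fin m) :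
    (g • H).Adj x y ↔ H.Adj (g⁻¹ x) (g⁻¹ y) := Iff.rfl

noncomputable def aclass (H : SimpleGraph (Fin m)) : ℕ :=
  (Finset.univ.filter fun H' : SimpleGraph (Fin m) => Nonempty (H' ≃g H)).card

lemma mem_orbit_iff_iso {F H : SimpleGraph (Fin m)} :
    H ∈ MulAction.orbit (Equiv.Perm (Fin m)) F ↔ Nonempty (H ≃g F) := by
  constructor
  · rintro ⟨g, rfl⟩
    exact ⟨{ toEquiv := (g⁻¹ : Equiv.Perm (Fin m)), map_rel_iff' := by intro x y; rfl }⟩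
  · rintro ⟨e⟩
    refine ⟨(e.toEquiv.symm : Equiv.Perm (Fin m)), ?_⟩
    ext x y
    rw [permGraph_smul_adj]
    show F.Adj (e.toEquiv x) (e.toEquiv y) ↔ H.Adj x y
    exact e.map_adj_iff

noncomputable def stabilizerEquivAut (F : SimpleGraph (Fin m)) :
    MulAction.stabilizer (Equiv.Perm (Fin m)) F ≃ (F ≃g F) where
  toFun g :=
    { toEquiv := (g : Equiv.Perm (Fin m))
      map_rel_iff' := by
        intro x y
        have hg : (g : Equiv.Perm (Fin m)) • F = F := g.2
        have h2 : ((g : Equiv.Perm (Fin m)) • F).Adj ((g : Equiv.Perm (Fin m)) x)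
            ((g : Equiv.Perm (Fin m)) y) ↔ F.Adj ((g : Equiv.Perm (Fin m)) x)
            ((g : Equiv.Perm (Fin m)) y) := by rw [hg]
        rw [permGraph_smul_adj] at h2
        simp only [Equiv.Perm.inv_def, Equiv.symm_apply_apply] at h2
        exact h2.symm }
  invFun e := ⟨(e.toEquiv : Equiv.Perm (Fin m)), by
    ext x y
    rw [permGraph_smul_adj]
    show F.Adj (e.toEquiv.symm x) (e.toEquiv.symm y) ↔ F.Adj x y
    conv_rhs => rw [← e.apply_symm_apply x, ← e.apply_symm_apply y]
    exact (e.map_adj_iff (v := e.toEquiv.symm x) (w := e.toEquiv.symm y)).symm⟩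
  left_inv g := by ext x; rfl
  right_inv e := by ext x; rfl

lemma aclass_mul_autcard (F : SimpleGraph (Fin m)) :
    aclass F * Nat.card (F ≃g F) = m.factorial := by
  have horbit : aclass F = Fintype.card (MulAction.orbit (Equiv.Perm (Fin m)) F) := by
    rw [Fintype.card_subtype]
    unfold aclass
    congr 1
    apply Finset.filter_congr
    intro H _
    simp only [mem_orbit_iff_iso]
  have h1 : Nat.card (F ≃g F)
      = Fintype.card (MulAction.stabilizer (Equiv.Perm (Fin m)) F) := by
    rw [← Nat.card_eq_fintype_card]
    exact Nat.card_congr (stabilizerEquivAut F).symm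
  rw [horbit, h1, MulAction.card_orbit_mul_card_stabilizer_eq_card_group,
    Fintype.card_perm, Fintype.card_fin]

noncomputable def wgt (m : ℕ) (p : ℝ) (H : SimpleGraph (Fin m)) : ℝ :=
  p ^ H.edgeFinset.card * (1 - p) ^ (m.choose 2 - H.edgeFinset.card)

lemma edge_le_choose {m : ℕ} (H : SimpleGraph (Fin m)) : H.edgeFinset.card ≤ m.choose 2 := by
  simpa using H.card_edgeFinset_le_card_choose_two

lemma sum_T_pow {k : ℕ} (p : ℝ) :
    ∑ T : Finset (Fin k), p ^ T.card * (1 - p) ^ (k - T.card) = 1 := by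
  have h := Finset.prod_add (fun _ : Fin k => p) (fun _ : Fin k => 1 - p) Finset.univ
  simp only [Finset.prod_const, Finset.powerset_univ] at h
  have h2 : ∀ T : Finset (Fin k), p ^ T.card * (1 - p) ^ (Finset.univ \ T).card
      = p ^ T.card * (1 - p) ^ (k - T.card) := by
    intro T
    rw [Finset.card_sdiff_of_subset (Finset.subset_univ T), Finset.card_univ, Fintype.card_fin]
  rw [Finset.sum_congr rfl (fun T _ => h2 T)] at h
  rw [← h]
  simp

lemma wgt_congr {m : ℕ} {H H' : SimpleGraph (Fin m)} (e : H ≃g H') (p : ℝ) :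
    wgt m p H = wgt m p H' := by
  rw [wgt, wgt, card_edgeFinset_iso e]

lemma wgt_extG {k : ℕ} (p : ℝ) (H : SimpleGraph (Fin k)) (T : Finset (Fin k)) :
    wgt (k+1) p (ExtG H T) = wgt k p H * (p ^ T.card * (1 - p) ^ (k - T.card)) := by
  have hT : T.card ≤ k := by simpa using T.card_le_univ
  have hch : (k+1).choose 2 = k.choose 2 + k := by
    rw [Nat.choose_succ_succ, Nat.choose_one_right, Nat.add_comm]
  have h1 : (k+1).choose 2 - (H.edgeFinset.card + T.card)
      = (k.choose 2 - H.edgeFinset.card) + (k - T.card) := by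
    have := edge_le_choose H
    omega
  rw [wgt, wgt, extG_card_edge, h1, pow_add, pow_add]
  ring

lemma sum_ext_last {k : ℕ} (p : ℝ) (F : SimpleGraph (Fin k)) :
    ∑ H' : SimpleGraph (Fin (k+1)),
      (if Nonempty ((H'.induce ({Fin.last k}ᶜ : Set (Fin (k+1)))) ≃g F) then wgt (k+1) p H' else 0)
    = ∑ H : SimpleGraph (Fin k), (if Nonempty (H ≃g F) then wgt k p H else 0) := by
  rw [← Equiv.sum_comp (extEquiv (k := k))]
  rw [Fintype.sum_prod_type]
  have hterm : ∀ (H : SimpleGraph (Fin k)) (T : Finset (Fin k)),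
      (if Nonempty (((ExtG H T).induce ({Fin.last k}ᶜ : Set (Fin (k+1)))) ≃g F)
        then wgt (k+1) p (ExtG H T) else 0)
      = (if Nonempty (H ≃g F) then wgt k p H else 0) * (p ^ T.card * (1 - p) ^ (k - T.card)) := by
    intro H T
    rw [nonempty_iso_congr (extRestr H T), wgt_extG]
    by_cases h : Nonempty (H ≃g F) <;> simp [h]
  calc ∑ H, ∑ T, (if Nonempty (((ExtG H T).induce ({Fin.last k}ᶜ : Set (Fin (k+1)))) ≃g F)
        then wgt (k+1) p (ExtG H T) else 0)
      = ∑ H : SimpleGraph (Fin k), (if Nonempty (H ≃g F) then wgt k p H else 0) *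
          (∑ T : Finset (Fin k), p ^ T.card * (1 - p) ^ (k - T.card)) := by
        refine Finset.sum_congr rfl fun H _ => ?_
        rw [Finset.mul_sum]
        exact Finset.sum_congr rfl fun T _ => hterm H T
    _ = ∑ H : SimpleGraph (Fin k), (if Nonempty (H ≃g F) then wgt k p H else 0) := by
        refine Finset.sum_congr rfl fun H _ => ?_
        rw [sum_T_pow, mul_one]

lemma sum_del_w {k : ℕ} (p : ℝ) (F : SimpleGraph (Fin k)) (w : Fin (k+1)) :
    ∑ H' : SimpleGraph (Fin (k+1)),
      (if Nonempty ((H'.induce ({w}ᶜ : Set (Fin (k+1)))) ≃g F) then wgt (k+1) p H' else 0)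
    = ∑ H : SimpleGraph (Fin k), (if Nonempty (H ≃g F) then wgt k p H else 0) := by
  classical
  set π : Equiv.Perm (Fin (k+1)) := Equiv.swap w (Fin.last k) with hπ
  rw [← sum_ext_last p F]
  rw [← Equiv.sum_comp (MulAction.toPerm π :
    Equiv.Perm (SimpleGraph (Fin (k+1))))]
  refine Finset.sum_congr rfl fun H' _ => ?_
  let hiso : (π • H') ≃g H' :=
    { toEquiv := (π⁻¹ : Equiv.Perm (Fin (k+1))), map_rel_iff' := by intro x y; rfl }
  have h1 : ((π • H').induce ({w}ᶜ : Set (Fin (k+1)))) ≃g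
      H'.induce ((⇑hiso) '' ({w}ᶜ : Set (Fin (k+1)))) := isoInduce hiso _
  have him : (⇑hiso) '' ({w}ᶜ : Set (Fin (k+1))) = ({Fin.last k}ᶜ : Set (Fin (k+1))) := by
    rw [image_compl_singleton hiso.bijective]
    have hv0 : (hiso w : Fin (k+1)) = π⁻¹ w := rfl
    have hv : (hiso w : Fin (k+1)) = Fin.last k := by
      rw [hv0, hπ]
      simp [Equiv.swap_inv, Equiv.swap_apply_left]
    rw [hv]
  rw [him] at h1
  have hcond : Nonempty (((π • H').induce ({w}ᶜ : Set (Fin (k+1)))) ≃g F)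
      ↔ Nonempty ((H'.induce ({Fin.last k}ᶜ : Set (Fin (k+1)))) ≃g F) :=
    nonempty_iso_congr h1
  have hwgt : wgt (k+1) p (π • H') = wgt (k+1) p H' := wgt_congr hiso p
  show (if Nonempty (((π • H').induce ({w}ᶜ : Set (Fin (k+1)))) ≃g F)
      then wgt (k+1) p (π • H') else 0) = _
  rw [hwgt, if_congr hcond rfl rfl]

lemma sum_dstar_wgt {k : ℕ} (p : ℝ) (F : SimpleGraph (Fin k)) :
    ∑ H' : SimpleGraph (Fin (k+1)), (dstar F H' : ℝ) * wgt (k+1) p H'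
    = (k+1) * ∑ H : SimpleGraph (Fin k), (if Nonempty (H ≃g F) then wgt k p H else 0) := by
  classical
  have hdst : ∀ H' : SimpleGraph (Fin (k+1)), (dstar F H' : ℝ) =
      ∑ w : Fin (k+1),
        (if Nonempty ((H'.induce ({w}ᶜ : Set (Fin (k+1)))) ≃g F) then (1:ℝ) else 0) := by
    intro H'
    rw [dstar]
    rw [Finset.card_filter]
    push_cast
    rfl
  calc ∑ H' : SimpleGraph (Fin (k+1)), (dstar F H' : ℝ) * wgt (k+1) p H'
      = ∑ H' : SimpleGraph (Fin (k+1)), ∑ w : Fin (k+1),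
          (if Nonempty ((H'.induce ({w}ᶜ : Set (Fin (k+1)))) ≃g F)
            then wgt (k+1) p H' else 0) := by
        refine Finset.sum_congr rfl fun H' _ => ?_
        rw [hdst, Finset.sum_mul]
        refine Finset.sum_congr rfl fun w _ => ?_
        by_cases h : Nonempty ((H'.induce ({w}ᶜ : Set (Fin (k+1)))) ≃g F) <;> simp [h]
    _ = ∑ w : Fin (k+1), ∑ H' : SimpleGraph (Fin (k+1)),
          (if Nonempty ((H'.induce ({w}ᶜ : Set (Fin (k+1)))) ≃g F)
            then wgt (k+1) p H' else 0) := Finset.sum_comm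
    _ = ∑ w : Fin (k+1), ∑ H : SimpleGraph (Fin k),
          (if Nonempty (H ≃g F) then wgt k p H else 0) := by
        refine Finset.sum_congr rfl fun w _ => sum_del_w p F w
    _ = (k+1) * ∑ H : SimpleGraph (Fin k), (if Nonempty (H ≃g F) then wgt k p H else 0) := by
        rw [Finset.sum_const, Finset.card_univ, Fintype.card_fin, nsmul_eq_mul]
        push_cast
        ring

noncomputable def expN (n k : ℕ) (p : ℝ) (F : SimpleGraph (Fin k)) : ℝ :=
  ((n.descFactorial k : ℝ) / (Nat.card (F ≃g F))) *
    p ^ F.edgeFinset.card * (1 - p) ^ (k.choose 2 - F.edgeFinset.card)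

noncomputable def uK (k n : ℕ) (G : SimpleGraph (Fin n)) (p : ℝ) : ℝ :=
  ⨆ F : SimpleGraph (Fin k), |(Ncount F G : ℝ) - expN n k p F|

lemma expN_eq_wgt (n m : ℕ) (p : ℝ) (H : SimpleGraph (Fin m)) :
    expN n m p H = (n.descFactorial m : ℝ) / (Nat.card (H ≃g H)) * wgt m p H := by
  rw [expN, wgt]; ring

lemma aclass_pos {m : ℕ} (H : SimpleGraph (Fin m)) : 0 < aclass H := by
  rw [aclass, Finset.card_pos]
  exact ⟨H, Finset.mem_filter.2 ⟨Finset.mem_univ _, ⟨Iso.refl⟩⟩⟩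

lemma sum_class_wgt {k : ℕ} (p : ℝ) (F : SimpleGraph (Fin k)) :
    ∑ H : SimpleGraph (Fin k), (if Nonempty (H ≃g F) then wgt k p H else 0)
    = (aclass F : ℝ) * wgt k p F := by
  classical
  rw [← Finset.sum_filter]
  rw [Finset.sum_congr rfl (fun H hH => wgt_congr (Classical.choice (Finset.mem_filter.1 hH).2) p)]
  rw [Finset.sum_const, nsmul_eq_mul]
  rfl

lemma identB (n k : ℕ) (p : ℝ) (F : SimpleGraph (Fin k)) :
    ∑ H' : SimpleGraph (Fin (k+1)), ((dstar F H' : ℝ) / (aclass H')) * expN n (k+1) p H'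
    = ((n - k : ℕ) : ℝ) * expN n k p F := by
  classical
  have hstep : ∀ H' : SimpleGraph (Fin (k+1)),
      ((dstar F H' : ℝ) / (aclass H')) * expN n (k+1) p H'
      = (n.descFactorial (k+1) : ℝ) / ((k+1).factorial : ℝ)
          * ((dstar F H' : ℝ) * wgt (k+1) p H') := by
    intro H'
    have hfa : (aclass H' : ℝ) * (Nat.card (H' ≃g H') : ℝ) = ((k+1).factorial : ℝ) := by
      exact_mod_cast aclass_mul_autcard H'
    have ha : (aclass H' : ℝ) ≠ 0 := Nat.cast_ne_zero.2 (aclass_pos H').ne'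
    have hA : (Nat.card (H' ≃g H') : ℝ) ≠ 0 := Nat.cast_ne_zero.2 (autCard_pos H').ne'
    rw [expN_eq_wgt, ← hfa]
    field_simp
  rw [Finset.sum_congr rfl (fun H' _ => hstep H'), ← Finset.mul_sum, sum_dstar_wgt,
    sum_class_wgt, expN_eq_wgt]
  have hfaF : (aclass F : ℝ) * (Nat.card (F ≃g F) : ℝ) = (k.factorial : ℝ) := by
    exact_mod_cast aclass_mul_autcard F
  have haF : (aclass F : ℝ) ≠ 0 := Nat.cast_ne_zero.2 (aclass_pos F).ne'
  have hAF : (Nat.card (F ≃g F) : ℝ) ≠ 0 := Nat.cast_ne_zero.2 (autCard_pos F).ne'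
  have hdesc : (n.descFactorial (k+1) : ℝ) = ((n - k : ℕ) : ℝ) * (n.descFactorial k : ℝ) := by
    exact_mod_cast congrArg (Nat.cast (R := ℝ)) (Nat.descFactorial_succ n k)
  have hfact : ((k+1).factorial : ℝ) = ((k+1) : ℝ) * (k.factorial : ℝ) := by
    exact_mod_cast congrArg (Nat.cast (R := ℝ)) (Nat.factorial_succ k)
  have hkf : (k.factorial : ℝ) ≠ 0 := Nat.cast_ne_zero.2 (Nat.factorial_pos k).ne'
  have hk1 : ((k+1 : ℕ) : ℝ) ≠ 0 := by positivity
  rw [hdesc, hfact, ← hfaF]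
  field_simp

lemma aclass_congr {m : ℕ} {H H' : SimpleGraph (Fin m)} (e : H ≃g H') :
    aclass H = aclass H' := by
  unfold aclass
  congr 1
  apply Finset.filter_congr
  intro X _
  exact ⟨fun ⟨i⟩ => ⟨i.trans e⟩, fun ⟨i⟩ => ⟨i.trans e.symm⟩⟩

lemma identA (n k : ℕ) (G : SimpleGraph (Fin n)) (F : SimpleGraph (Fin k)) :
    ∑ H' : SimpleGraph (Fin (k+1)), ((dstar F H' : ℝ) / (aclass H')) * (Ncount H' G : ℝ)
    = ((n - k : ℕ) : ℝ) * (Ncount F G : ℝ) := by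
  classical
  have hN : ∀ H' : SimpleGraph (Fin (k+1)), (Ncount H' G : ℝ) =
      ∑ s : Finset (Fin n),
        (if Nonempty ((G.induce (s : Set (Fin n))) ≃g H') then (1:ℝ) else 0) := by
    intro H'
    rw [Ncount, Finset.card_filter, Nat.cast_sum]
    refine Finset.sum_congr rfl fun t _ => ?_
    by_cases h : Nonempty ((G.induce (t : Set (Fin n))) ≃g H') <;> simp [h]
  have hswap : ∑ H' : SimpleGraph (Fin (k+1)), ((dstar F H' : ℝ) / (aclass H')) * (Ncount H' G : ℝ)
      = ∑ s : Finset (Fin n), ∑ H' : SimpleGraph (Fin (k+1)),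
          (if Nonempty ((G.induce (s : Set (Fin n))) ≃g H') then (1:ℝ) else 0)
            * ((dstar F H' : ℝ) / (aclass H')) := by
    rw [Finset.sum_comm]
    refine Finset.sum_congr rfl fun H' _ => ?_
    rw [hN, Finset.mul_sum]
    exact Finset.sum_congr rfl fun t _ => mul_comm _ _
  rw [hswap]
  have hs : ∀ s : Finset (Fin n),
      (∑ H' : SimpleGraph (Fin (k+1)),
        (if Nonempty ((G.induce (s : Set (Fin n))) ≃g H') then (1:ℝ) else 0)
          * ((dstar F H' : ℝ) / (aclass H')))
      = (if s.card = k+1 then ((s.filter fun v => Nonempty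
          (G.induce ((s.erase v : Finset (Fin n)) : Set (Fin n)) ≃g F)).card : ℝ) else 0) := by
    intro s
    have hsum0 : ∀ H' : SimpleGraph (Fin (k+1)),
        (if Nonempty ((G.induce (s : Set (Fin n))) ≃g H') then (1:ℝ) else 0)
          * ((dstar F H' : ℝ) / (aclass H'))
        = (if Nonempty ((G.induce (s : Set (Fin n))) ≃g H')
            then ((dstar F H' : ℝ) / (aclass H')) else 0) := by
      intro H'
      by_cases h : Nonempty ((G.induce (s : Set (Fin n))) ≃g H') <;> simp [h]
    rw [Finset.sum_congr rfl fun H' _ => hsum0 H', ← Finset.sum_filter]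
    by_cases hcard : s.card = k+1
    · obtain ⟨Hs, ⟨e⟩⟩ := exists_rep G hcard
      have hterm : ∀ H' ∈ Finset.univ.filter fun H' : SimpleGraph (Fin (k+1)) =>
          Nonempty ((G.induce (s : Set (Fin n))) ≃g H'),
          ((dstar F H' : ℝ) / (aclass H')) = ((dstar F Hs : ℝ) / (aclass Hs)) := by
        intro H' hH'
        obtain ⟨e'⟩ := (Finset.mem_filter.1 hH').2
        have eiso : H' ≃g Hs := e'.symm.trans e
        rw [dstar_congr F eiso, aclass_congr eiso]
      rw [Finset.sum_congr rfl hterm, Finset.sum_const, nsmul_eq_mul]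
      have hfilt : (Finset.univ.filter fun H' : SimpleGraph (Fin (k+1)) =>
          Nonempty ((G.induce (s : Set (Fin n))) ≃g H')).card = aclass Hs := by
        unfold aclass
        congr 1
        apply Finset.filter_congr
        intro X _
        first
        | exact ⟨fun ⟨i⟩ => ⟨i.symm.trans e⟩, fun ⟨i⟩ => ⟨e.trans i.symm⟩⟩
        | · simp only [eq_iff_iff]
            exact ⟨fun ⟨i⟩ => ⟨i.symm.trans e⟩, fun ⟨i⟩ => ⟨e.trans i.symm⟩⟩
      rw [hfilt, if_pos hcard]
      have ha : (aclass Hs : ℝ) ≠ 0 := Nat.cast_ne_zero.2 (aclass_pos Hs).ne'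
      rw [mul_comm, div_mul_cancel₀ _ ha]
      exact_mod_cast congrArg (Nat.cast (R := ℝ)) (dstar_eq_of_iso G F s e).symm
    · have hempty : (Finset.univ.filter fun H' : SimpleGraph (Fin (k+1)) =>
          Nonempty ((G.induce (s : Set (Fin n))) ≃g H')) = ∅ := by
        rw [Finset.filter_eq_empty_iff]
        intro H' _
        intro hne
        exact hcard (card_of_iso hne)
      rw [hempty, Finset.sum_empty, if_neg hcard]
  rw [Finset.sum_congr rfl fun s _ => hs s, ← Finset.sum_filter]
  have hpc : (Finset.univ.filter fun s : Finset (Fin n) => s.card = k+1)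
      = Finset.univ.powersetCard (k+1) := by
    ext s
    simp [Finset.mem_powersetCard_univ]
  rw [hpc]
  rw [← Nat.cast_sum]
  rw [double_count G F]
  push_cast
  ring

instance graphFinite {V : Type*} [Finite V] : Finite (SimpleGraph V) := by
  have : Finite (V → V → Prop) := by
    have : Finite Prop := inferInstance
    infer_instance
  exact Finite.of_injective (fun G : SimpleGraph V => G.Adj)
    (fun G H h => SimpleGraph.ext h)

lemma uK_le_abs {m n : ℕ} (G : SimpleGraph (Fin n)) (p : ℝ) (F : SimpleGraph (Fin m)) :
    |(Ncount F G : ℝ) - expN n m p F| ≤ uK m n G p := by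
  have h := le_ciSup (f := fun F : SimpleGraph (Fin m) => |(Ncount F G : ℝ) - expN n m p F|)
    ((Set.finite_range _).bddAbove) F
  exact h

lemma uK_nonneg {m n : ℕ} (G : SimpleGraph (Fin n)) (p : ℝ) : 0 ≤ uK m n G p :=
  le_trans (abs_nonneg _) (uK_le_abs G p ⊥)

lemma dstar_le {k : ℕ} (F : SimpleGraph (Fin k)) (H : SimpleGraph (Fin (k+1))) :
    dstar F H ≤ k + 1 := by
  calc dstar F H ≤ Finset.univ.card := Finset.card_le_card (Finset.filter_subset _ _)
  _ = k + 1 := by simp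

lemma perF_bound {n k : ℕ} (G : SimpleGraph (Fin n)) (p : ℝ) (F : SimpleGraph (Fin k)) :
    |(Ncount F G : ℝ) - expN n k p F| * ((n - k : ℕ) : ℝ)
      ≤ (Fintype.card (SimpleGraph (Fin (k+1))) : ℝ) * ((k:ℝ)+1) * uK (k+1) n G p := by
  classical
  have hident : ((n - k : ℕ) : ℝ) * ((Ncount F G : ℝ) - expN n k p F)
      = ∑ H' : SimpleGraph (Fin (k+1)), ((dstar F H' : ℝ) / (aclass H'))
          * ((Ncount H' G : ℝ) - expN n (k+1) p H') := by
    have h1 := identA n k G F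
    have h2 := identB n k p F
    calc ((n - k : ℕ) : ℝ) * ((Ncount F G : ℝ) - expN n k p F)
        = ((n - k : ℕ) : ℝ) * (Ncount F G : ℝ) - ((n - k : ℕ) : ℝ) * expN n k p F := by ring
      _ = (∑ H' : SimpleGraph (Fin (k+1)), ((dstar F H' : ℝ) / (aclass H')) * (Ncount H' G : ℝ))
          - ∑ H' : SimpleGraph (Fin (k+1)), ((dstar F H' : ℝ) / (aclass H'))
              * expN n (k+1) p H' := by rw [h1, h2]
      _ = _ := by
          rw [← Finset.sum_sub_distrib]
          exact Finset.sum_congr rfl fun H' _ => by ring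
  have habs : |(Ncount F G : ℝ) - expN n k p F| * ((n - k : ℕ) : ℝ)
      = |((n - k : ℕ) : ℝ) * ((Ncount F G : ℝ) - expN n k p F)| := by
    rw [abs_mul, abs_of_nonneg (by positivity : (0:ℝ) ≤ ((n - k : ℕ) : ℝ))]
    ring
  rw [habs, hident]
  calc |∑ H' : SimpleGraph (Fin (k+1)), ((dstar F H' : ℝ) / (aclass H'))
          * ((Ncount H' G : ℝ) - expN n (k+1) p H')|
      ≤ ∑ H' : SimpleGraph (Fin (k+1)), |((dstar F H' : ℝ) / (aclass H'))
          * ((Ncount H' G : ℝ) - expN n (k+1) p H')| := Finset.abs_sum_le_sum_abs _ _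
    _ ≤ ∑ _H' : SimpleGraph (Fin (k+1)), ((k:ℝ)+1) * uK (k+1) n G p := by
        refine Finset.sum_le_sum fun H' _ => ?_
        rw [abs_mul]
        have hda : |((dstar F H' : ℝ) / (aclass H'))| ≤ (k:ℝ)+1 := by
          rw [abs_of_nonneg (by positivity)]
          have h1 : ((dstar F H' : ℝ) / (aclass H')) ≤ (dstar F H' : ℝ) := by
            apply div_le_self (by positivity)
            exact_mod_cast (aclass_pos H')
          refine le_trans h1 ?_
          exact_mod_cast dstar_le F H'
        exact mul_le_mul hda (uK_le_abs G p H') (abs_nonneg _) (by positivity)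
    _ = (Fintype.card (SimpleGraph (Fin (k+1))) : ℝ) * ((k:ℝ)+1) * uK (k+1) n G p := by
        rw [Finset.sum_const, Finset.card_univ, nsmul_eq_mul]
        ring

/-- step-up lemma: for every `k ≥ 2` there is `c_k > 0` such that for every
graph `G` on `n ≥ k+1` vertices and every `p ∈ (0,1)`,
`u_{k+1}(G,p) ≥ c_k · n · u_k(G,p)`. -/
theorem uK_step_up (k : ℕ) (hk : 2 ≤ k) :
    ∃ c : ℝ, 0 < c ∧ ∀ n : ℕ, k + 1 ≤ n → ∀ G : SimpleGraph (Fin n),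
      ∀ p : ℝ, 0 < p → p < 1 →
      uK (k + 1) n G p ≥ c * n * uK k n G p := by
  classical
  set Ck : ℝ := (Fintype.card (SimpleGraph (Fin (k+1))) : ℝ) with hCk
  have hCkpos : 0 < Ck := by
    rw [hCk]
    exact_mod_cast Fintype.card_pos
  refine ⟨(Ck * ((k:ℝ)+1)^2)⁻¹, by positivity, ?_⟩
  intro n hn G p hp hp1
  set u1 := uK (k+1) n G p with hu1
  set u0 := uK k n G p with hu0
  have hu1n : 0 ≤ u1 := uK_nonneg G p
  have hnk1 : (1:ℕ) ≤ n - k := by omega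
  have hnkpos : (0:ℝ) < ((n - k : ℕ) : ℝ) := by exact_mod_cast hnk1
  have hukb : u0 * ((n - k : ℕ) : ℝ) ≤ Ck * ((k:ℝ)+1) * u1 := by
    rw [← le_div_iff₀ hnkpos] at *
    have : Nonempty (SimpleGraph (Fin k)) := ⟨⊥⟩
    refine ciSup_le fun F => ?_
    rw [le_div_iff₀ hnkpos]
    exact perF_bound G p F
  -- n ≤ (k+1) * (n - k)
  have hnle : (n : ℝ) ≤ ((k:ℝ)+1) * ((n - k : ℕ) : ℝ) := by
    have hkk : k ≤ k * (n - k) := Nat.le_mul_of_pos_right k (by omega)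
    have h2 : n ≤ (k+1) * (n-k) := by
      have hexp : (k+1) * (n-k) = k * (n-k) + (n-k) := by ring
      omega
    exact_mod_cast h2
  have hu0n : 0 ≤ u0 := uK_nonneg G p
  rw [ge_iff_le]
  calc (Ck * ((k:ℝ)+1)^2)⁻¹ * (n:ℝ) * u0
      ≤ (Ck * ((k:ℝ)+1)^2)⁻¹ * (((k:ℝ)+1) * ((n - k : ℕ) : ℝ)) * u0 := by
        apply mul_le_mul_of_nonneg_right _ hu0n
        apply mul_le_mul_of_nonneg_left hnle (by positivity)
    _ = (Ck * ((k:ℝ)+1))⁻¹ * (u0 * ((n - k : ℕ) : ℝ)) := by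
        field_simp
    _ ≤ (Ck * ((k:ℝ)+1))⁻¹ * (Ck * ((k:ℝ)+1) * u1) := by
        apply mul_le_mul_of_nonneg_left hukb (by positivity)
    _ = u1 := by
        field_simp
end
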